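/- Let $b > 0$, $p = e^b$, $q = p/(p-1)$, $C_b = p^{1-q}/q$. Let $\mu_0, \mu_1$ be probability measures with $\mu_1 \ll \mu_0$, density $\varrho = d\mu_1/d\mu_0 \in L^q(\mu_0)$. Suppose $T \ge 0$ satisfies: for every bounded measurable $f$, $C_b \left(\int e^{e^{-b} f}\, d\mu_1\right)^q \le T \left(\int e^f \, d\mu_0\right)^{q-1}$. Then $C_b \int \varrho^q\, d\mu_0 \le T$. -/
import Mathlib

open MeasureTheory Filter Topology

theorem stmt_9 {X : Type*} [MeasurableSpace X]
    (μ0 μ1 : Measure X) [IsProbabilityMeasure μ0] [IsProbabilityMeasure μ1]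
    (hac : μ1 ≪ μ0)
    (b p q Cb : ℝ) (hb : 0 < b) (hp : p = Real.exp b) (hq : q = p / (p - 1))
    (hCb : Cb = p ^ (1 - q) / q)
    (ϱ : X → ℝ) (hϱ : ϱ = fun z => (μ1.rnDeriv μ0 z).toReal)
    (hϱLq : Integrable (fun z => ϱ z ^ q) μ0)
    (T : ℝ) (hT : 0 ≤ T)
    (h : ∀ f : X → ℝ, Measurable f → (∃ M, ∀ z, |f z| ≤ M) →
      Cb * (∫ z, Real.exp (Real.exp (-b) * f z) ∂μ1) ^ q ≤
        T * (∫ z, Real.exp (f z) ∂μ0) ^ (q - 1)) :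
    Cb * ∫ z, ϱ z ^ q ∂μ0 ≤ T := by
  classical
  have hp1 : 1 < p := by rw [hp]; exact Real.one_lt_exp_iff.2 hb
  have hp0 : 0 < p := lt_trans one_pos hp1
  have hq1 : 1 < q := by
    rw [hq, lt_div_iff₀ (by linarith)]; linarith
  have hq0 : 0 < q := lt_trans one_pos hq1
  have hpne : p ≠ 0 := ne_of_gt hp0
  have hpm1 : p - 1 ≠ 0 := sub_ne_zero.2 hp1.ne'
  have hqp : q * (1 / p) = q - 1 := by
    rw [hq]; field_simp; ring
  have heb : Real.exp (-b) = 1 / p := by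
    rw [hp, Real.exp_neg, one_div]
  have hCb0 : 0 ≤ Cb := by rw [hCb]; positivity
  have hϱm : Measurable ϱ := by
    rw [hϱ]; exact (Measure.measurable_rnDeriv μ1 μ0).ennreal_toReal
  have hϱ0 : ∀ z, 0 ≤ ϱ z := by intro z; rw [hϱ]; exact ENNReal.toReal_nonneg
  have hϱz : ∀ z, (μ1.rnDeriv μ0 z).toReal = ϱ z := fun z => by rw [hϱ]
  have hϱqm : Measurable fun z => ϱ z ^ q :=
    (Real.continuous_rpow_const hq0.le).measurable.comp hϱm
  have hϱq1m : Measurable fun z => ϱ z ^ (q - 1) :=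
    (Real.continuous_rpow_const (by linarith : (0:ℝ) ≤ q - 1)).measurable.comp hϱm
  set B := ∫ z, ϱ z ^ q ∂μ0 with hB
  have hB0 : 0 ≤ B := integral_nonneg fun z => Real.rpow_nonneg (hϱ0 z) q
  -- pointwise identity ϱ • ϱ^(q-1) = ϱ^q
  have hmul : ∀ z, ϱ z • ϱ z ^ (q - 1) = ϱ z ^ q := by
    intro z
    rcases eq_or_lt_of_le (hϱ0 z) with h0 | h0
    · simp [← h0, Real.zero_rpow (by linarith : q ≠ 0),
        Real.zero_rpow (by linarith : q - 1 ≠ 0)]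
    · rw [smul_eq_mul]
      nth_rw 1 [← Real.rpow_one (ϱ z)]
      rw [← Real.rpow_add h0]; ring_nf
  -- transfer integrability and integral to μ1
  have hint1 : Integrable (fun z => ϱ z ^ (q - 1)) μ1 := by
    rw [← MeasureTheory.integrable_rnDeriv_smul_iff hac]
    refine hϱLq.congr (Filter.Eventually.of_forall fun z => ?_)
    simp only [hϱz]; exact (hmul z).symm
  have hL : ∫ z, ϱ z ^ (q - 1) ∂μ1 = B := by
    rw [← MeasureTheory.integral_rnDeriv_smul hac (f := fun z => ϱ z ^ (q - 1)), hB]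
    exact integral_congr_ae (Filter.Eventually.of_forall fun z => by
      simp only [hϱz]; exact hmul z)
  -- the truncations
  set g : ℕ → X → ℝ :=
    fun n z => max (Real.exp (-(n : ℝ))) (min (Real.exp (n : ℝ)) (ϱ z ^ q)) with hg
  have hgpos : ∀ n z, 0 < g n z := fun n z => lt_max_of_lt_left (Real.exp_pos _)
  have hgm : ∀ n, Measurable (g n) := fun n =>
    measurable_const.max (measurable_const.min hϱqm)
  have hgle : ∀ n z, g n z ≤ Real.exp (n : ℝ) := fun n z =>
    max_le (Real.exp_le_exp.2 (by simp [neg_le_self_iff])) (min_le_left _ _)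
  set hfun : ℕ → X → ℝ := fun n z => min (Real.exp ((n : ℝ) / p)) (ϱ z ^ (q - 1)) with hhf
  have hh0 : ∀ n z, 0 ≤ hfun n z := fun n z =>
    le_min (Real.exp_pos _).le (Real.rpow_nonneg (hϱ0 z) _)
  -- min commutes with rpow (1/p)
  have hminpow : ∀ A C : ℝ, 0 ≤ A → 0 ≤ C →
      (min A C) ^ (1 / p) = min (A ^ (1 / p)) (C ^ (1 / p)) := by
    intro A C hA hC
    rcases le_total A C with hAC | hAC
    · rw [min_eq_left hAC, min_eq_left (Real.rpow_le_rpow hA hAC (by positivity))]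
    · rw [min_eq_right hAC, min_eq_right (Real.rpow_le_rpow hC hAC (by positivity))]
  -- key pointwise comparison on the μ1 side
  have hkey : ∀ n z, hfun n z ≤ Real.exp (Real.exp (-b) * Real.log (g n z)) := by
    intro n z
    rw [heb, mul_comm, ← Real.rpow_def_of_pos (hgpos n z)]
    have h1 : (min (Real.exp (n : ℝ)) (ϱ z ^ q)) ^ (1 / p) ≤ g n z ^ (1 / p) :=
      Real.rpow_le_rpow (le_min (Real.exp_pos _).le (Real.rpow_nonneg (hϱ0 z) q))
        (le_max_right _ _) (by positivity)
    refine le_trans (le_of_eq ?_) h1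
    rw [hminpow _ _ (Real.exp_pos _).le (Real.rpow_nonneg (hϱ0 z) q),
      ← Real.exp_mul, mul_one_div, ← Real.rpow_mul (hϱ0 z), hqp]
  -- integrals of the truncations
  set a : ℕ → ℝ := fun n => ∫ z, hfun n z ∂μ1 with ha
  set c : ℕ → ℝ := fun n => ∫ z, g n z ∂μ0 with hc
  -- the inequality for each n
  have hineq : ∀ n, Cb * a n ^ q ≤ T * c n ^ (q - 1) := by
    intro n
    have hfm : Measurable fun z => Real.log (g n z) := (hgm n).log
    have hfb : ∃ M, ∀ z, |Real.log (g n z)| ≤ M := by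
      refine ⟨n, fun z => abs_le.2 ⟨?_, ?_⟩⟩
      · calc (-(n : ℝ)) = Real.log (Real.exp (-(n : ℝ))) := (Real.log_exp _).symm
          _ ≤ Real.log (g n z) := Real.log_le_log (Real.exp_pos _) (le_max_left _ _)
      · calc Real.log (g n z) ≤ Real.log (Real.exp (n : ℝ)) :=
            Real.log_le_log (hgpos n z) (hgle n z)
          _ = n := Real.log_exp _
    have := h (fun z => Real.log (g n z)) hfm hfb
    have hrhs : (∫ z, Real.exp (Real.log (g n z)) ∂μ0) = c n :=
      integral_congr_ae (Filter.Eventually.of_forall fun z => Real.exp_log (hgpos n z))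
    rw [hrhs] at this
    refine le_trans ?_ this
    have hintE : Integrable (fun z => Real.exp (Real.exp (-b) * Real.log (g n z))) μ1 := by
      refine Integrable.mono' (integrable_const (Real.exp ((n : ℝ) / p)))
        ((Real.measurable_exp.comp ((hfm.const_mul _))).aestronglyMeasurable)
        (Filter.Eventually.of_forall fun z => ?_)
      rw [Real.norm_eq_abs, abs_of_pos (Real.exp_pos _), Real.exp_le_exp, heb]
      have hlogle : Real.log (g n z) ≤ (n : ℝ) := by
        calc Real.log (g n z) ≤ Real.log (Real.exp (n : ℝ)) :=
            Real.log_le_log (hgpos n z) (hgle n z)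
          _ = n := Real.log_exp _
      calc 1 / p * Real.log (g n z) ≤ 1 / p * (n : ℝ) :=
          mul_le_mul_of_nonneg_left hlogle (by positivity)
        _ = (n : ℝ) / p := by ring
    have hinth : Integrable (hfun n) μ1 := by
      refine Integrable.mono' (integrable_const (Real.exp ((n : ℝ) / p)))
        ((measurable_const.min hϱq1m).aestronglyMeasurable)
        (Filter.Eventually.of_forall fun z => ?_)
      rw [Real.norm_eq_abs, abs_of_nonneg (hh0 n z)]
      exact min_le_left _ _
    have hle : a n ≤ ∫ z, Real.exp (Real.exp (-b) * Real.log (g n z)) ∂μ1 :=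
      integral_mono hinth hintE (hkey n)
    have han : 0 ≤ a n := integral_nonneg (hh0 n)
    exact mul_le_mul_of_nonneg_left (Real.rpow_le_rpow han hle hq0.le) hCb0
  -- limits
  have hca : Tendsto a atTop (𝓝 B) := by
    rw [← hL]
    refine tendsto_integral_of_dominated_convergence (fun z => ϱ z ^ (q - 1))
      (fun n => (measurable_const.min hϱq1m).aestronglyMeasurable)
      hint1 (fun n => Filter.Eventually.of_forall fun z => ?_)
      (Filter.Eventually.of_forall fun z => ?_)
    · rw [Real.norm_eq_abs, abs_of_nonneg (hh0 n z)]; exact min_le_right _ _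
    · have hev : ∀ᶠ n : ℕ in atTop, hfun n z = ϱ z ^ (q - 1) := by
        have : Tendsto (fun n : ℕ => Real.exp ((n : ℝ) / p)) atTop atTop :=
          Real.tendsto_exp_atTop.comp
            ((tendsto_natCast_atTop_atTop).atTop_div_const hp0)
        filter_upwards [this.eventually_ge_atTop (ϱ z ^ (q - 1))] with n hn
        exact min_eq_right hn
      exact Tendsto.congr' (hev.mono fun n hn => hn.symm) tendsto_const_nhds
  have hcc : Tendsto c atTop (𝓝 B) := by
    refine tendsto_integral_of_dominated_convergence (fun z => 1 + ϱ z ^ q)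
      (fun n => (hgm n).aestronglyMeasurable)
      ((integrable_const 1).add hϱLq) (fun n => Filter.Eventually.of_forall fun z => ?_)
      (Filter.Eventually.of_forall fun z => ?_)
    · rw [Real.norm_eq_abs, abs_of_pos (hgpos n z)]
      have h1 : Real.exp (-(n : ℝ)) ≤ 1 := Real.exp_le_one_iff.2 (by simp)
      have h2 : (0:ℝ) ≤ ϱ z ^ q := Real.rpow_nonneg (hϱ0 z) q
      show g n z ≤ 1 + ϱ z ^ q
      exact max_le (by linarith) (le_trans (min_le_right _ _) (by linarith))
    · rcases eq_or_lt_of_le (Real.rpow_nonneg (hϱ0 z) q) with h0 | h0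
      · have hgz : ∀ n : ℕ, g n z = Real.exp (-(n : ℝ)) := by
          intro n
          rw [hg]
          simp only [← h0]
          rw [min_eq_right (Real.exp_pos _).le, max_eq_left (Real.exp_pos _).le]
        rw [← h0]
        simp only [hgz]
        exact Real.tendsto_exp_atBot.comp
          (tendsto_neg_atBot_iff.2 tendsto_natCast_atTop_atTop)
      · have hev : ∀ᶠ n : ℕ in atTop, g n z = ϱ z ^ q := by
          have h1 : Tendsto (fun n : ℕ => Real.exp ((n : ℝ))) atTop atTop :=
            Real.tendsto_exp_atTop.comp tendsto_natCast_atTop_atTop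
          have h2 : Tendsto (fun n : ℕ => Real.exp (-(n : ℝ))) atTop (𝓝 0) :=
            Real.tendsto_exp_atBot.comp (tendsto_neg_atBot_iff.2 tendsto_natCast_atTop_atTop)
          filter_upwards [h1.eventually_ge_atTop (ϱ z ^ q),
            h2.eventually (eventually_le_nhds h0)] with n hn1 hn2
          rw [hg]
          simp only
          rw [min_eq_right hn1, max_eq_right hn2]
        exact Tendsto.congr' (hev.mono fun n hn => hn.symm) tendsto_const_nhds
  -- pass to the limit
  have hlim : Cb * B ^ q ≤ T * B ^ (q - 1) := by
    refine le_of_tendsto_of_tendsto'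
      (Tendsto.const_mul Cb (((Real.continuousAt_rpow_const B q (Or.inr hq0.le)).tendsto).comp hca))
      (Tendsto.const_mul T (((Real.continuousAt_rpow_const B (q - 1)
        (Or.inr (by linarith))).tendsto).comp hcc)) hineq
  rcases eq_or_lt_of_le hB0 with hB0' | hB0'
  · rw [← hB0', mul_zero]; exact hT
  · have hBq : B ^ q = B ^ (q - 1) * B := by
      nth_rw 3 [← Real.rpow_one B]
      rw [← Real.rpow_add hB0']; norm_num
    rw [hBq] at hlim
    have hBq1 : 0 < B ^ (q - 1) := Real.rpow_pos_of_pos hB0' _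
    have h2 : Cb * B * B ^ (q - 1) ≤ T * B ^ (q - 1) := by
      calc Cb * B * B ^ (q - 1) = Cb * (B ^ (q - 1) * B) := by ring
        _ ≤ T * B ^ (q - 1) := hlim
    exact le_of_mul_le_mul_right h2 hBq1
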